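/- Suppose there exist a ∈ ℝⁿ with ‖a‖₂ ≤ 1 and constants 0 < φ_min ≤ φ_max such that λ_min(n^{-1/2}𝒳*(a)) ≥ φ_min and λ_max(n^{-1/2}𝒳*(a)) ≤ φ_max, where 𝒳*(a) = ∑ᵢ aᵢXᵢ. Then for any ζ > 1 and R = ζ φ_max/φ_min, for all A ⪰ 0 with tr(A) = R and B ⪰ 0 with tr(B) = 1, one has (1/n)‖𝒳(A) − 𝒳(B)‖₂² ≥ (ζ−1)² φ_max². -/

import Mathlib

open Matrix

lemma trace_nonneg_of_psd {m : ℕ} {M : Matrix (Fin m) (Fin m) ℝ}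
    (hM : M.PosSemidef) : 0 ≤ M.trace := by
  have h : ∀ i, 0 ≤ M i i := fun i => by
    exact hM.diag_nonneg
  exact Finset.sum_nonneg fun i _ => h i

lemma trace_mul_nonneg_of_psd {m : ℕ} {M A : Matrix (Fin m) (Fin m) ℝ}
    (hM : M.PosSemidef) (hA : A.PosSemidef) : 0 ≤ (M * A).trace := by
  obtain ⟨B, rfl⟩ : ∃ B : Matrix (Fin m) (Fin m) ℝ, A = Bᴴ * B := by
    open scoped MatrixOrder in exact CStarAlgebra.nonneg_iff_eq_star_mul_self.mp hA.nonneg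
  have : (M * (Bᴴ * B)).trace = (B * M * Bᴴ).trace := by
    rw [← mul_assoc, trace_mul_comm, mul_assoc]
  rw [this]
  exact trace_nonneg_of_psd (hM.mul_mul_conjTranspose_same B)

theorem slow_rate_condition_of_posdef_in_range {m n : ℕ}
    (X : Fin n → Matrix (Fin m) (Fin m) ℝ) (hXs : ∀ i, (X i).IsSymm)
    (a : Fin n → ℝ) (ha : ∑ i, a i ^ 2 ≤ 1)
    (φmin φmax ζ : ℝ) (hφmin : 0 < φmin) (hφ : φmin ≤ φmax) (hζ : 1 < ζ)
    (hlow : ((Real.sqrt n)⁻¹ • (∑ i, a i • X i) -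
        φmin • (1 : Matrix (Fin m) (Fin m) ℝ)).PosSemidef)
    (hhigh : (φmax • (1 : Matrix (Fin m) (Fin m) ℝ) -
        (Real.sqrt n)⁻¹ • (∑ i, a i • X i)).PosSemidef)
    (A B : Matrix (Fin m) (Fin m) ℝ)
    (hA : A.PosSemidef) (hAtr : A.trace = ζ * φmax / φmin)
    (hB : B.PosSemidef) (hBtr : B.trace = 1) :
    (ζ - 1) ^ 2 * φmax ^ 2 ≤
      (1 / (n : ℝ)) * ∑ i, ((X i * A).trace - (X i * B).trace) ^ 2 := by
  have hφmax : 0 < φmax := hφmin.trans_le hφ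
  -- m = 0 : contradiction via trace A
  rcases Nat.eq_zero_or_pos m with hm | hm
  · subst hm
    have : A.trace = 0 := by simp [Matrix.trace]
    rw [hAtr] at this
    have : 0 < ζ * φmax / φmin := by positivity
    simp_all
  -- n = 0 : contradiction via hlow
  rcases Nat.eq_zero_or_pos n with hn | hn
  · subst hn
    exfalso
    have h0 : (∑ i : Fin 0, a i • X i) = 0 := by simp
    rw [h0, smul_zero, zero_sub] at hlow
    have htr := trace_nonneg_of_psd hlow
    rw [trace_neg, trace_smul, trace_one] at htr
    have hm1 : (1:ℝ) ≤ (Fintype.card (Fin m) : ℝ) := by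
      simp only [Fintype.card_fin]; exact_mod_cast hm
    simp only [smul_eq_mul] at htr
    nlinarith
  -- main case
  set S := ∑ i, a i • X i with hS
  set s := Real.sqrt n with hs
  have hspos : 0 < s := Real.sqrt_pos.mpr (by exact_mod_cast hn)
  have hssq : s ^ 2 = n := Real.sq_sqrt (Nat.cast_nonneg n)
  set v : Fin n → ℝ := fun i => (X i * A).trace - (X i * B).trace with hv
  -- trace identities
  have htr : ∀ C : Matrix (Fin m) (Fin m) ℝ,
      ((s⁻¹ • S) * C).trace = s⁻¹ * ∑ i, a i * (X i * C).trace := by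
    intro C
    rw [smul_mul_assoc, trace_smul, smul_eq_mul, hS, Finset.sum_mul, trace_sum]
    congr 1
    exact Finset.sum_congr rfl fun i _ => by rw [smul_mul_assoc, trace_smul, smul_eq_mul]
  -- lower bound on trace(M A)
  have key1 : φmin * A.trace ≤ ((s⁻¹ • S) * A).trace := by
    have h := trace_mul_nonneg_of_psd hlow hA
    simp only [sub_mul, trace_sub, smul_mul_assoc, one_mul, trace_smul, smul_eq_mul] at h ⊢
    linarith
  have key2 : ((s⁻¹ • S) * B).trace ≤ φmax * B.trace := by
    have h := trace_mul_nonneg_of_psd hhigh hB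
    simp only [sub_mul, trace_sub, smul_mul_assoc, one_mul, trace_smul, smul_eq_mul] at h ⊢
    linarith
  have hzphi : φmin * A.trace = ζ * φmax := by
    rw [hAtr]; field_simp
  have hsum : s * ((ζ - 1) * φmax) ≤ ∑ i, a i * v i := by
    have e : ∑ i, a i * v i = s * (((s⁻¹ • S) * A).trace - ((s⁻¹ • S) * B).trace) := by
      rw [htr A, htr B, ← mul_sub, ← mul_assoc, mul_inv_cancel₀ hspos.ne', one_mul,
        ← Finset.sum_sub_distrib]
      exact Finset.sum_congr rfl fun i _ => by ring
    rw [e]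
    have : (ζ - 1) * φmax ≤ ((s⁻¹ • S) * A).trace - ((s⁻¹ • S) * B).trace := by
      have := key1; have := key2
      rw [hzphi] at key1; rw [hBtr] at key2
      linarith
    nlinarith
  have hpos : (0:ℝ) ≤ s * ((ζ - 1) * φmax) := by
    have : (0:ℝ) ≤ (ζ - 1) * φmax := by nlinarith
    positivity
  have hcs : (∑ i, a i * v i) ^ 2 ≤ (∑ i, a i ^ 2) * ∑ i, v i ^ 2 :=
    Finset.sum_mul_sq_le_sq_mul_sq _ _ _
  have hvnn : (0:ℝ) ≤ ∑ i, v i ^ 2 := Finset.sum_nonneg fun i _ => sq_nonneg _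
  have h1 : (s * ((ζ - 1) * φmax)) ^ 2 ≤ ∑ i, v i ^ 2 := by
    calc (s * ((ζ - 1) * φmax)) ^ 2 ≤ (∑ i, a i * v i) ^ 2 := by
          apply pow_le_pow_left₀ hpos hsum
      _ ≤ (∑ i, a i ^ 2) * ∑ i, v i ^ 2 := hcs
      _ ≤ 1 * ∑ i, v i ^ 2 := by apply mul_le_mul_of_nonneg_right ha hvnn
      _ = ∑ i, v i ^ 2 := one_mul _
  have hn' : (0:ℝ) < n := by exact_mod_cast hn
  rw [mul_pow, hssq] at h1
  rw [div_mul_eq_mul_div, le_div_iff₀ hn', one_mul]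
  calc (ζ - 1) ^ 2 * φmax ^ 2 * n = n * ((ζ-1)*φmax)^2 := by ring
    _ ≤ ∑ i, v i ^ 2 := h1
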